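/- For every integer n ≥ 4, β_n is not a Pisot number: x^n - x - 1 has a complex root γ with |γ| > 1 and γ ≠ β_n. -/

import Mathlib

set_option maxHeartbeats 1000000

open Metric Finset


private lemma beta_not_pisot_aux (s : ℝ) (hs1 : 1 < s) (hc8 : s^8 ≤ s^2 + 1) :
    (s^4 + 3*s^3 + s^2 + 2*s)^2 < (s^2+1) * (2*s^3 + s^2 + s + 1)^2 := by
  have ht : (0:ℝ) ≤ s - 1 := by linarith
  nlinarith [mul_nonneg ht (sq_nonneg (s - 1 - 1/7)), sq_nonneg (s - 1 - 9/77),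
    mul_nonneg (mul_nonneg ht ht) (mul_nonneg ht ht),
    mul_nonneg (mul_nonneg (mul_nonneg ht ht) (mul_nonneg ht ht)) ht,
    mul_nonneg (mul_nonneg (mul_nonneg ht ht) (mul_nonneg ht ht)) (mul_nonneg ht ht),
    mul_nonneg (mul_nonneg (mul_nonneg ht ht) (mul_nonneg ht ht)) (mul_nonneg (mul_nonneg ht ht) ht),
    sq_nonneg ((s-1)^4), hc8]

/-- For every integer `n ≥ 4`, the real root `β_n > 1` of `x^n - x - 1` is not
a Pisot number: `x^n - x - 1` has a complex root `γ ≠ β_n` with `|γ| > 1`. -/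
theorem beta_not_pisot (n : ℕ) (hn : 4 ≤ n) (b : ℝ)
    (hb : 1 < b) (hroot : b ^ n - b - 1 = 0) :
    ∃ γ : ℂ, γ ^ n - γ - 1 = 0 ∧ 1 < ‖γ‖ ∧ γ ≠ (b : ℂ) := by
  by_contra hcon
  push_neg at hcon
  obtain ⟨m, rfl⟩ : ∃ m, n = m + 1 := ⟨n - 1, by omega⟩
  have hm : 3 ≤ m := by omega
  have hb0 : (0:ℝ) < b := by linarith
  have hbn : b ^ (m+1) = b + 1 := by linarith
  -- the circle lemma
  have circle : ∀ z : ℂ, ‖z‖ = 1 → z^(m+1) - z - 1 ≠ 0 := by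
    intro z hz h0
    have hzn : z^(m+1) = z + 1 := by linear_combination h0
    have hzz : z * (starRingEnd ℂ) z = 1 := by
      rw [Complex.mul_conj, Complex.normSq_eq_norm_sq, hz]; norm_num
    have habs1 : ‖z + 1‖ = 1 := by
      rw [← hzn, norm_pow, hz, one_pow]
    have hA : (z + 1) * ((starRingEnd ℂ) z + 1) = 1 := by
      have := Complex.mul_conj (z + 1)
      rw [Complex.normSq_eq_norm_sq, habs1] at this
      simpa [map_add] using this
    have htr : z + (starRingEnd ℂ) z = -1 := by linear_combination hA - hzz
    have hq : z^2 + z + 1 = 0 := by linear_combination (-1 : ℂ) * hzz + z * htr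
    have h3 : z^3 = 1 := by linear_combination (z - 1) * hq
    have hzmod : z^(m+1) = z^((m+1) % 3) := by
      conv_lhs => rw [← Nat.div_add_mod (m+1) 3]
      rw [pow_add, pow_mul, h3, one_pow, one_mul]
    have hk : (m+1) % 3 = 0 ∨ (m+1) % 3 = 1 ∨ (m+1) % 3 = 2 := by omega
    have e : z^((m+1) % 3) = z + 1 := by rw [← hzmod, hzn]
    rcases hk with hk | hk | hk <;> rw [hk] at e
    · have hz0 : z = 0 := by linear_combination -e
      rw [hz0] at hq; norm_num at hq
    · simp at e
    · have hzm1 : z = -1 := by linear_combination (-1/2 : ℂ) * e + (1/2 : ℂ) * hq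
      rw [hzm1] at hq; norm_num at hq
  -- polynomial players
  set G : ℂ → ℂ := fun z => (∑ i ∈ Finset.range (m+1), ((b:ℂ)*z)^i) - z^m with hG_def
  set den : ℂ → ℂ := fun z => ((b:ℂ) - z) * G z with hden_def
  set h : ℂ → ℂ := fun z => (z^(m+1) - z - 1) / den z with hh_def
  have idA : ∀ z : ℂ, (1 - (b:ℂ)*z) * G z = 1 - z^m - z^(m+1) := by
    intro z
    have e1 : (∑ i ∈ Finset.range (m+1), ((b:ℂ)*z)^i) * (((b:ℂ)*z) - 1)
        = ((b:ℂ)*z)^(m+1) - 1 := geom_sum_mul _ _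
    have e2 : z^m * z = z^(m+1) := (pow_succ z m).symm
    have e3 : (b:ℂ)^(m+1) = (b:ℂ) + 1 := by
      have : ((b^(m+1) : ℝ) : ℂ) = ((b+1 : ℝ) : ℂ) := by rw [hbn]
      push_cast at this; exact this
    have e4 : ((b:ℂ)*z)^(m+1) = (b:ℂ)^(m+1) * z^(m+1) := mul_pow _ _ _
    simp only [hG_def]
    linear_combination (-1 : ℂ) * e1 + (b:ℂ) * e2 + (-(z^(m+1))) * e3 + (-1 : ℂ) * e4
  -- G has no zero in the closed unit disk
  have gnz : ∀ z ∈ closedBall (0:ℂ) 1, G z ≠ 0 := by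
    intro z hz hG0
    have hzle : ‖z‖ ≤ 1 := by
      simpa using mem_closedBall_zero_iff.1 hz
    by_cases hbz : (b:ℂ) * z = 1
    · -- then G z = (m+1) - z^m
      have : (m+1 : ℂ) - z^m = 0 := by
        have : (∑ i ∈ Finset.range (m+1), ((b:ℂ)*z)^i) - z^m = 0 := hG0
        rw [hbz] at this
        simpa using this
      have hzm : ‖z^m‖ ≤ 1 := by
        rw [norm_pow]; exact pow_le_one₀ (norm_nonneg z) hzle
      have e : ((m:ℂ)+1) = z^m := by linear_combination this
      have habs : ‖(m:ℂ)+1‖ ≤ 1 := by rw [e]; exact hzm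
      have hcast : ((m:ℂ)+1) = ((m+1 : ℕ) : ℂ) := by push_cast; ring
      rw [hcast, Complex.norm_natCast] at habs
      have h4 : (4:ℝ) ≤ ((m+1 : ℕ) : ℝ) := by exact_mod_cast Nat.succ_le_succ hm
      linarith
    · have hP : 1 - z^m - z^(m+1) = 0 := by
        have e := idA z
        rw [hG0, mul_zero] at e
        exact e.symm
      have hz0 : z ≠ 0 := by
        intro hz0
        rw [hz0] at hP
        simp [zero_pow (by omega : m ≠ 0)] at hP
      have hzn0 : z^(m+1) ≠ 0 := pow_ne_zero _ hz0
      have hw : (z⁻¹)^(m+1) - z⁻¹ - 1 = 0 := by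
        have key : ((z⁻¹)^(m+1) - z⁻¹ - 1) * z^(m+1) = 1 - z^m - z^(m+1) := by
          have hzi : z⁻¹ * z = 1 := inv_mul_cancel₀ hz0
          have hp : (z⁻¹)^(m+1) * z^(m+1) = 1 := by rw [← mul_pow, hzi, one_pow]
          linear_combination hp - z^m * hzi
        rw [hP] at key
        exact (mul_eq_zero.1 key).resolve_right hzn0
      have hwabs : 1 ≤ ‖z⁻¹‖ := by
        rw [norm_inv, one_le_inv_iff₀]
        exact ⟨norm_pos_iff.2 hz0, hzle⟩
      rcases eq_or_lt_of_le hwabs with heq | hlt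
      · exact circle z⁻¹ heq.symm hw
      · have hwb : z⁻¹ = (b:ℂ) := hcon z⁻¹ hw hlt
        apply hbz
        rw [← hwb]
        field_simp
  -- b - z nonzero on the closed disk
  have bnz : ∀ z ∈ closedBall (0:ℂ) 1, ((b:ℂ) - z) ≠ 0 := by
    intro z hz he
    have hzle : ‖z‖ ≤ 1 := by
      simpa using mem_closedBall_zero_iff.1 hz
    have hzb : z = (b:ℂ) := by linear_combination -he
    rw [hzb, Complex.norm_real, Real.norm_eq_abs, abs_of_pos hb0] at hzle
    linarith
  have dnz : ∀ z ∈ closedBall (0:ℂ) 1, den z ≠ 0 := fun z hz =>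
    mul_ne_zero (bnz z hz) (gnz z hz)
  have hdiffG : Differentiable ℂ G := by
    apply Differentiable.sub
    · apply Differentiable.fun_sum
      intro i _
      exact (differentiable_id.const_mul _).pow i
    · exact differentiable_pow m
  have hdiffNum : Differentiable ℂ (fun z : ℂ => z^(m+1) - z - 1) :=
    ((differentiable_pow (m+1)).sub differentiable_id).sub (differentiable_const 1)
  have hdiffDen : Differentiable ℂ den :=
    ((differentiable_const _).sub differentiable_id).mul hdiffG
  have hdiff : DifferentiableOn ℂ h (closedBall 0 1) :=
    DifferentiableOn.div hdiffNum.differentiableOn hdiffDen.differentiableOn dnz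
  -- boundary bound
  have hfr : ∀ z ∈ sphere (0:ℂ) 1, ‖h z‖ ≤ 1 := by
    intro z hz
    have hz1 : ‖z‖ = 1 := by
      simpa using mem_sphere_zero_iff_norm.1 hz
    have hzz : z * (starRingEnd ℂ) z = 1 := by
      rw [Complex.mul_conj, Complex.normSq_eq_norm_sq, hz1]; norm_num
    have n1 : ‖(b:ℂ) - z‖ = ‖1 - (b:ℂ)*z‖ := by
      have e : (b:ℂ) - z = -(z * (starRingEnd ℂ) (1 - (b:ℂ)*z)) := by
        rw [map_sub, map_one, map_mul, Complex.conj_ofReal]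
        linear_combination (-(b:ℂ)) * hzz
      rw [e, norm_neg, norm_mul, Complex.norm_conj, hz1, one_mul]
    have n2 : ‖z^(m+1) - z - 1‖ = ‖1 - z^m - z^(m+1)‖ := by
      have hzm : (z * (starRingEnd ℂ) z)^m = 1 := by rw [hzz, one_pow]
      have hzm1 : (z * (starRingEnd ℂ) z)^(m+1) = 1 := by rw [hzz, one_pow]
      have e : z^(m+1) * (starRingEnd ℂ) (1 - z^m - z^(m+1)) = z^(m+1) - z - 1 := by
        rw [map_sub, map_sub, map_one, map_pow, map_pow]
        calc z^(m+1) * (1 - ((starRingEnd ℂ) z)^m - ((starRingEnd ℂ) z)^(m+1))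
            = z^(m+1) - z * (z * (starRingEnd ℂ) z)^m - (z * (starRingEnd ℂ) z)^(m+1) := by
              ring
          _ = z^(m+1) - z - 1 := by rw [hzm, hzm1]; ring
      rw [← e, norm_mul, norm_pow, hz1, one_pow, one_mul, Complex.norm_conj]
    have nden : ‖den z‖ = ‖z^(m+1) - z - 1‖ := by
      have : ‖den z‖ = ‖(b:ℂ) - z‖ * ‖G z‖ := by
        rw [hden_def]; exact norm_mul _ _
      rw [this, n1, ← norm_mul, idA z, ← n2]
    show ‖(z^(m+1) - z - 1) / den z‖ ≤ 1
    rw [norm_div, nden]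
    rcases eq_or_ne ‖z^(m+1) - z - 1‖ 0 with h0 | h0
    · rw [h0]; norm_num
    · rw [div_self h0]
  have hmax : ∀ z ∈ closedBall (0:ℂ) 1, ‖h z‖ ≤ 1 := by
    intro z hz
    have hcl : DifferentiableOn ℂ h (closure (ball (0:ℂ) 1)) := by
      rwa [closure_ball (0:ℂ) one_ne_zero]
    refine Complex.norm_le_of_forall_mem_frontier_norm_le isBounded_ball hcl.diffContOnCl ?_ ?_
    · intro w hw
      rw [frontier_ball (0:ℂ) one_ne_zero] at hw
      exact hfr w hw
    · rwa [closure_ball (0:ℂ) one_ne_zero]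
  -- the Möbius transported function
  set a : ℝ := b⁻¹ with ha_def
  have ha0 : 0 < a := inv_pos.2 hb0
  have ha1 : a < 1 := by
    rw [ha_def, inv_lt_one_iff₀]; right; exact hb
  have h0val : h 0 = -(a:ℂ) := by
    have hG00 : G 0 = 1 := by
      have e := idA 0
      rw [mul_zero, sub_zero, one_mul] at e
      rw [e, zero_pow (by omega : m ≠ 0), zero_pow (by omega : m + 1 ≠ 0)]
      ring
    rw [hh_def, hden_def]
    simp only
    rw [hG00, zero_pow (by omega : m + 1 ≠ 0)]
    rw [ha_def]
    push_cast
    rw [sub_zero, mul_one]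
    field_simp
    ring
  set H : ℂ → ℂ := fun z => (h z + (a:ℂ)) / (1 + (a:ℂ) * h z) with hH_def
  have hmob : ∀ w : ℂ, ‖w‖ ≤ 1 → ‖w + (a:ℂ)‖ ≤ ‖1 + (a:ℂ) * w‖ := by
    intro w hw
    have hw2 : w.re^2 + w.im^2 ≤ 1 := by
      have : Complex.normSq w ≤ 1 := by
        rw [Complex.normSq_eq_norm_sq]
        nlinarith [norm_nonneg w]
      simpa [Complex.normSq_apply, sq] using this
    have hsq : Complex.normSq (w + (a:ℂ)) ≤ Complex.normSq (1 + (a:ℂ) * w) := by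
      simp only [Complex.normSq_apply, Complex.add_re, Complex.add_im, Complex.mul_re,
        Complex.mul_im, Complex.one_re, Complex.one_im, Complex.ofReal_re, Complex.ofReal_im]
      have h1 : (0:ℝ) ≤ 1 - a^2 := by nlinarith
      have h2 : (0:ℝ) ≤ 1 - w.re^2 - w.im^2 := by linarith
      nlinarith [mul_nonneg h1 h2]
    have := Real.sqrt_le_sqrt hsq
    rwa [← Complex.norm_def, ← Complex.norm_def] at this
  have hHdennz : ∀ z : ℂ, ‖h z‖ ≤ 1 → (1 + (a:ℂ) * h z) ≠ 0 := by
    intro z hz he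
    have : ‖(a:ℂ) * h z‖ = 1 := by
      have e : (a:ℂ) * h z = -1 := by linear_combination he
      rw [e]; simp
    rw [norm_mul, Complex.norm_real, Real.norm_eq_abs, abs_of_pos ha0] at this
    nlinarith [norm_nonneg (h z)]
  have hHle : ∀ z ∈ closedBall (0:ℂ) 1, ‖H z‖ ≤ 1 := by
    intro z hz
    have hhz : ‖h z‖ ≤ 1 := by
      exact hmax z hz
    rw [hH_def]
    simp only
    rw [norm_div]
    have hnum := hmob (h z) hhz
    have hdenpos : 0 < ‖1 + (a:ℂ) * h z‖ :=
      norm_pos_iff.2 (hHdennz z hhz)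
    rw [div_le_one hdenpos]
    exact hnum
  have hH0 : H 0 = 0 := by
    rw [hH_def]
    simp only
    rw [h0val]
    simp
  have hHdiff : DifferentiableOn ℂ H (ball 0 1) := by
    have hsub : (ball (0:ℂ) 1) ⊆ closedBall (0:ℂ) 1 := ball_subset_closedBall
    apply DifferentiableOn.div
    · exact ((hdiff.mono hsub).add (differentiableOn_const _))
    · exact ((differentiableOn_const _).add ((differentiableOn_const _).mul (hdiff.mono hsub)))
    · intro z hz
      apply hHdennz
      exact hmax z (hsub hz)
  -- Schwarz inequality at real points
  have schwarz : ∀ z : ℂ, z ∈ ball (0:ℂ) 1 → z ≠ 0 → ‖H z‖ ≤ ‖z‖ := by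
    intro z hz hz0
    have key : ∀ ε : ℝ, 0 < ε → ‖H z‖ ≤ (1 + ε) * ‖z‖ := by
      intro ε hε
      have hmaps : Set.MapsTo H (ball (0:ℂ) 1) (ball (H 0) (1 + ε)) := by
        intro w hw
        rw [mem_ball, hH0, dist_zero_right]
        calc ‖H w‖ ≤ 1 := hHle w (ball_subset_closedBall hw)
          _ < 1 + ε := by linarith
      have hds := Complex.norm_dslope_le_div_of_mapsTo_ball hHdiff (hmaps.mono_right ball_subset_closedBall) hz
      rw [dslope_of_ne H hz0, slope_def_field, hH0, sub_zero, sub_zero, div_one,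
        norm_div] at hds
      have hzn : (0:ℝ) < ‖z‖ := by rw [norm_pos_iff]; exact hz0
      calc ‖H z‖ = ‖H z‖ / ‖z‖ * ‖z‖ := (div_mul_cancel₀ _ (ne_of_gt hzn)).symm
        _ ≤ (1 + ε) * ‖z‖ := mul_le_mul_of_nonneg_right hds (norm_nonneg z)
    by_contra hlt
    push_neg at hlt
    have hzn : (0:ℝ) < ‖z‖ := by rw [norm_pos_iff]; exact hz0
    set d : ℝ := (‖H z‖ - ‖z‖) / (2 * ‖z‖) with hd_def
    have hε : 0 < d := div_pos (by linarith) (by linarith)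
    have hkey := key _ hε
    have hd : d * (2 * ‖z‖) = ‖H z‖ - ‖z‖ := div_mul_cancel₀ _ (by positivity)
    nlinarith [hkey, hd]
  -- real setup: s = sqrt b, u = sqrt (b+1)
  obtain ⟨s, hs0, hs2⟩ : ∃ s : ℝ, 0 < s ∧ s^2 = b :=
    ⟨Real.sqrt b, Real.sqrt_pos.2 hb0, Real.sq_sqrt hb0.le⟩
  obtain ⟨u, hu0, hu2⟩ : ∃ u : ℝ, 0 < u ∧ u^2 = b + 1 :=
    ⟨Real.sqrt (b+1), Real.sqrt_pos.2 (by linarith), Real.sq_sqrt (by linarith)⟩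
  have hu2' : u^2 = s^2 + 1 := by rw [hu2, hs2]
  have hs1 : 1 < s := by nlinarith
  have hu1 : 1 < u := by nlinarith
  have hsu : s < u := by nlinarith
  have husum : u < s + 1 := by nlinarith
  have hsn : s^(m+1) = u := by
    have h1 : (s^(m+1))^2 = u^2 := by
      rw [← pow_mul, mul_comm (m+1) 2, pow_mul, hs2, hbn, hu2]
    have hx0 : 0 < s^(m+1) := pow_pos hs0 _
    have hfac : (s^(m+1) - u) * (s^(m+1) + u) = 0 := by linear_combination h1
    rcases mul_eq_zero.1 hfac with hf | hf
    · linarith [sub_eq_zero.1 hf]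
    · exfalso; linarith
  set r : ℝ := s⁻¹ with hr_def
  have hr0 : 0 < r := inv_pos.2 hs0
  have hr1 : r < 1 := by
    rw [hr_def, inv_lt_one_iff₀]; right; exact hs1
  have hsne0 : s ≠ 0 := ne_of_gt hs0
  have hune0 : u ≠ 0 := ne_of_gt hu0
  have hsne1 : s ≠ 1 := ne_of_gt hs1
  have hbr : b * r = s := by
    rw [hr_def, ← hs2]; field_simp
  have hrn : r^(m+1) = u⁻¹ := by rw [hr_def, inv_pow, hsn]
  have hsm' : s^m = u / s := by
    rw [eq_div_iff hsne0, ← pow_succ, hsn]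
  have hrm : r^m = s * u⁻¹ := by
    rw [hr_def, inv_pow, hsm', inv_div, div_eq_mul_inv]
  set gr : ℝ := (∑ i ∈ Finset.range (m+1), (b*r)^i) - r^m with hgr_def
  set x : ℝ := (r^(m+1) - r - 1) / ((b - r) * gr) with hx_def
  -- transfer h r = x
  have hGr : G (r:ℂ) = (gr:ℂ) := by
    rw [hG_def, hgr_def]; push_cast; ring
  have hhr : h (r:ℂ) = (x:ℂ) := by
    rw [hh_def]
    simp only
    rw [hden_def]
    simp only
    rw [hGr, hx_def]
    push_cast
    ring
  have hrball : (r:ℂ) ∈ closedBall (0:ℂ) 1 := by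
    rw [mem_closedBall_zero_iff, Complex.norm_real, Real.norm_eq_abs, abs_of_pos hr0]
    linarith
  have hxabs : |x| ≤ 1 := by
    have := hmax (r:ℂ) hrball
    rw [hhr, Complex.norm_real, Real.norm_eq_abs] at this
    exact this
  have hax : 0 < 1 + a * x := by nlinarith [abs_le.1 hxabs]
  set y : ℝ := (x + a) / (1 + a*x) with hy_def
  have hHr : H (r:ℂ) = (y:ℂ) := by
    rw [hH_def]
    simp only
    rw [hhr, hy_def]
    push_cast
    rfl
  have hyabs : |y| ≤ r := by
    have hrball' : (r:ℂ) ∈ ball (0:ℂ) 1 := by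
      rw [mem_ball_zero_iff, Complex.norm_real, Real.norm_eq_abs, abs_of_pos hr0]
      exact hr1
    have hrne : (r:ℂ) ≠ 0 := by
      simpa using ne_of_gt hr0
    have := schwarz (r:ℂ) hrball' hrne
    rw [hHr, Complex.norm_real, Complex.norm_real, Real.norm_eq_abs,
      Real.norm_eq_abs, abs_of_pos hr0] at this
    exact this
  -- closed forms
  have hgeom : (∑ i ∈ Finset.range (m+1), (b*r)^i) = (u - 1)/(s - 1) := by
    rw [hbr, geom_sum_eq hsne1, hsn]
  have hgr_val : gr = (u-1)/(s-1) - s * u⁻¹ := by rw [hgr_def, hgeom, hrm]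
  have hs1' : s - 1 ≠ 0 := sub_ne_zero.2 hsne1
  have hgr_val2 : gr = (1 + s - u) / (u * (s-1)) := by
    rw [hgr_val, eq_div_iff (mul_ne_zero hune0 hs1')]
    field_simp
    linear_combination hu2'
  have h1su : (0:ℝ) < 1 + s - u := by linarith
  have hq : (0:ℝ) < s^2 + s + 1 := by positivity
  have hinv : s⁻¹ < 1 := by rw [inv_lt_one_iff₀]; right; exact hs1
  have hs2gt : 1 < s^2 := by nlinarith [hs1]
  have hA : 0 < s^2 - s⁻¹ := by linarith
  have hxval : x = (s - u - s*u) / ((s^2+s+1) * (1+s-u)) := by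
    rw [hx_def, hrn, hgr_val2, hr_def, ← hs2]
    rw [div_eq_div_iff]
    · field_simp
      ring
    · exact ne_of_gt (mul_pos hA (div_pos h1su (mul_pos hu0 (by linarith))))
    · exact ne_of_gt (mul_pos hq h1su)
  have hc8 : s^8 ≤ s^2 + 1 := by
    have hb4 : b^4 ≤ b^(m+1) := pow_le_pow_right₀ hb.le (by omega)
    calc s^8 = (s^2)^4 := by ring
      _ = b^4 := by rw [hs2]
      _ ≤ b + 1 := by rw [hbn] at hb4; exact hb4
      _ = s^2 + 1 := by rw [hs2]
  have hP2pos : 0 < 2*s^3 + s^2 + s + 1 := by positivity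
  have hsq : (s^4 + 3*s^3 + s^2 + 2*s)^2 < (s^2+1) * (2*s^3 + s^2 + s + 1)^2 :=
    beta_not_pisot_aux s hs1 hc8
  have hP1P2 : s^4 + 3*s^3 + s^2 + 2*s < u * (2*s^3 + s^2 + s + 1) := by
    have h2 : (s^4 + 3*s^3 + s^2 + 2*s)^2 < (u * (2*s^3 + s^2 + s + 1))^2 := by
      rw [mul_pow, hu2']
      exact hsq
    exact lt_of_pow_lt_pow_left₀ 2 (le_of_lt (mul_pos hu0 hP2pos)) h2
  have hKpos : (0:ℝ) < s^2 - s + 1 := by linarith [sq_nonneg (2*s - 1)]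
  have key2 : x < -s / (s^2 - s + 1) := by
    rw [hxval, div_lt_div_iff₀ (mul_pos hq h1su) hKpos]
    linarith [hP1P2]
  have h1ar : (0:ℝ) < 1 + a * r := by positivity
  have hid : -s / (s^2 - s + 1) = -(a + r) / (1 + a*r) := by
    rw [ha_def, hr_def, ← hs2, div_eq_div_iff (ne_of_gt hKpos)]
    · field_simp
      ring
    · positivity
  have key3 : x * (1 + a*r) < -(a + r) := by
    have hk := key2
    rw [hid] at hk
    exact (lt_div_iff₀ h1ar).1 hk
  have hy1 := (abs_le.1 hyabs).1
  rw [hy_def, le_div_iff₀ hax] at hy1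
  linarith [key3, hy1]
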